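/- arXiv:1809.10385 — 8 statements merged into one kernel-verified Lean document; each statement's English description precedes it below -/
import Mathlib

section
/- For a periodic isotropic two-layered (PITL) medium, the Backus-average coefficients satisfy c1111 = c3333 if and only if (μ₂ − μ₁)(μ₂ − μ₁ + λ₂ − λ₁) = 0, i.e., if and only if μ₁ = μ₂ or λ₁ + μ₁ = λ₂ + μ₂. -/
open Filter Real

noncomputable section

/-- Arithmetic average of two values (equal layer thickness). -/
def avg2 (x y : ℝ) : ℝ := (x + y) / 2

/-- Backus-average coefficient c1111 of a PITL medium. -/
def c1111 (l1 l2 m1 m2 : ℝ) : ℝ :=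
  (avg2 (l1 / (l1 + 2 * m1)) (l2 / (l2 + 2 * m2))) ^ 2
      * (avg2 (1 / (l1 + 2 * m1)) (1 / (l2 + 2 * m2)))⁻¹
    + avg2 (4 * (l1 + m1) * m1 / (l1 + 2 * m1)) (4 * (l2 + m2) * m2 / (l2 + 2 * m2))

/-- Backus-average coefficient c1122 of a PITL medium. -/
def c1122 (l1 l2 m1 m2 : ℝ) : ℝ :=
  (avg2 (l1 / (l1 + 2 * m1)) (l2 / (l2 + 2 * m2))) ^ 2
      * (avg2 (1 / (l1 + 2 * m1)) (1 / (l2 + 2 * m2)))⁻¹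
    + avg2 (2 * l1 * m1 / (l1 + 2 * m1)) (2 * l2 * m2 / (l2 + 2 * m2))

/-- Backus-average coefficient c1133 of a PITL medium. -/
def c1133 (l1 l2 m1 m2 : ℝ) : ℝ :=
  avg2 (l1 / (l1 + 2 * m1)) (l2 / (l2 + 2 * m2))
    * (avg2 (1 / (l1 + 2 * m1)) (1 / (l2 + 2 * m2)))⁻¹

/-- Backus-average coefficient c3333 of a PITL medium. -/
def c3333 (l1 l2 m1 m2 : ℝ) : ℝ :=
  (avg2 (1 / (l1 + 2 * m1)) (1 / (l2 + 2 * m2)))⁻¹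

/-- Backus-average coefficient c2323 of a PITL medium. -/
def c2323 (_l1 _l2 m1 m2 : ℝ) : ℝ := (avg2 (1 / m1) (1 / m2))⁻¹

/-- Backus-average coefficient c1212 of a PITL medium. -/
def c1212 (_l1 _l2 m1 m2 : ℝ) : ℝ := avg2 m1 m2

/-- The anisotropy parameter φ of the Backus-average medium. -/
def phi (l1 l2 m1 m2 : ℝ) : ℝ :=
  (c1122 l1 l2 m1 m2 - c1133 l1 l2 m1 m2) / (2 * c1122 l1 l2 m1 m2)

end

/-- For a PITL medium, c1111 = c3333 iff
(μ₂ − μ₁)(μ₂ − μ₁ + λ₂ − λ₁) = 0, i.e., iff μ₁ = μ₂ or λ₁ + μ₁ = λ₂ + μ₂. -/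
theorem stmt0 (l1 l2 m1 m2 : ℝ)
    (hm1 : 0 < m1) (hm2 : 0 < m2)
    (hs1 : 0 ≤ l1 + (2 / 3) * m1) (hs2 : 0 ≤ l2 + (2 / 3) * m2) :
    (c1111 l1 l2 m1 m2 = c3333 l1 l2 m1 m2 ↔
      (m2 - m1) * (m2 - m1 + l2 - l1) = 0) ∧
    (c1111 l1 l2 m1 m2 = c3333 l1 l2 m1 m2 ↔
      (m1 = m2 ∨ l1 + m1 = l2 + m2)) := by
  have ha : 0 < l1 + 2 * m1 := by nlinarith
  have hb : 0 < l2 + 2 * m2 := by nlinarith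
  have hab : 0 < (l1 + 2 * m1) + (l2 + 2 * m2) := by linarith
  have key : c1111 l1 l2 m1 m2 - c3333 l1 l2 m1 m2 =
      2 * ((m2 - m1) * (m2 - m1 + l2 - l1)) / ((l1 + 2 * m1) + (l2 + 2 * m2)) := by
    unfold c1111 c3333 avg2
    field_simp
    ring
  have h1 : c1111 l1 l2 m1 m2 = c3333 l1 l2 m1 m2 ↔
      (m2 - m1) * (m2 - m1 + l2 - l1) = 0 := by
    rw [← sub_eq_zero, key, div_eq_zero_iff]
    constructor
    · rintro (h | h)
      · linarith
      · exact absurd h (ne_of_gt hab)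
    · intro h; left; linarith
  refine ⟨h1, h1.trans ?_⟩
  rw [mul_eq_zero, sub_eq_zero, show m2 - m1 + l2 - l1 = (l2 + m2) - (l1 + m1) by ring,
    sub_eq_zero]
  constructor
  · rintro (h | h)
    · exact Or.inl h.symm
    · exact Or.inr h.symm
  · rintro (h | h)
    · exact Or.inl h.symm
    · exact Or.inr h.symm
end

section
/- For a periodic isotropic two-layered (PITL) medium, the Backus-average coefficients satisfy c1122 = c1133 if and only if λ₁μ₁ + λ₂μ₂ = λ₁μ₂ + λ₂μ₁, i.e., if and only if μ₁ = μ₂ or λ₁ = λ₂. -/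
open Filter Real

/-- For a PITL medium, c1122 = c1133 iff
λ₁μ₁ + λ₂μ₂ = λ₁μ₂ + λ₂μ₁, i.e., iff μ₁ = μ₂ or λ₁ = λ₂. -/
theorem stmt1 (l1 l2 m1 m2 : ℝ)
    (hm1 : 0 < m1) (hm2 : 0 < m2)
    (hs1 : 0 ≤ l1 + (2 / 3) * m1) (hs2 : 0 ≤ l2 + (2 / 3) * m2) :
    (c1122 l1 l2 m1 m2 = c1133 l1 l2 m1 m2 ↔
      l1 * m1 + l2 * m2 = l1 * m2 + l2 * m1) ∧
    (c1122 l1 l2 m1 m2 = c1133 l1 l2 m1 m2 ↔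
      (m1 = m2 ∨ l1 = l2)) := by
  have ha1 : (0:ℝ) < l1 + 2 * m1 := by linarith
  have ha2 : (0:ℝ) < l2 + 2 * m2 := by linarith
  have h1 := ha1.ne'
  have h2 := ha2.ne'
  have h3 : (l1 + 2 * m1) + (l2 + 2 * m2) ≠ 0 := by positivity
  have hH : 1 / (l1 + 2 * m1) + 1 / (l2 + 2 * m2) ≠ 0 := by positivity
  have key : c1122 l1 l2 m1 m2 - c1133 l1 l2 m1 m2
      = (l1 - l2) * (m1 - m2) / ((l1 + 2 * m1) + (l2 + 2 * m2)) := by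
    unfold c1122 c1133 avg2
    field_simp
    ring
  have heq : c1122 l1 l2 m1 m2 = c1133 l1 l2 m1 m2 ↔ (l1 - l2) * (m1 - m2) = 0 := by
    rw [← sub_eq_zero, key, div_eq_zero_iff]
    constructor
    · rintro (h | h)
      · exact h
      · exact absurd h h3
    · exact Or.inl
  constructor
  · rw [heq]
    constructor
    · intro h; nlinarith [h]
    · intro h; nlinarith [h]
  · rw [heq, mul_eq_zero, sub_eq_zero, sub_eq_zero]
    exact or_comm
end

section
/- For a periodic isotropic two-layered (PITL) medium, if the Backus-average coefficients satisfy both c1111 = c3333 and c1122 = c1133, then μ₁ = μ₂ and consequently c1212 = c2323. In other words, there is no Backus-average transversely isotropic medium with c1212 ≠ c2323, c1111 = c3333 and c1133 = c1111 − 2·c1212. -/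
open Filter Real

lemma mu_eq (l1 l2 m1 m2 : ℝ)
    (ha1 : 0 < l1 + 2*m1) (ha2 : 0 < l2 + 2*m2)
    (h1 : c1111 l1 l2 m1 m2 = c3333 l1 l2 m1 m2)
    (h2 : c1122 l1 l2 m1 m2 = c1133 l1 l2 m1 m2) : m1 = m2 := by
  have ha1' : l1 + 2*m1 ≠ 0 := ne_of_gt ha1
  have ha2' : l2 + 2*m2 ≠ 0 := ne_of_gt ha2
  have hs : (l1 + 2*m1) + (l2 + 2*m2) ≠ 0 := by positivity
  simp only [c1111, c3333, c1122, c1133, avg2] at h1 h2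
  field_simp at h1 h2
  have hK : (8:ℝ) * ((l1+2*m1)*(l2+2*m2))^3 * ((l1+2*m1)+(l2+2*m2)) ≠ 0 := by
    positivity
  have h3 : (m1 - m2) * ((l1+2*m1) - (l2+2*m2)) = 0 := by
    apply mul_left_cancel₀ hK
    rw [mul_zero]
    linear_combination 4*((l1+2*m1)*(l2+2*m2))^2*((l1+2*m1)+(l2+2*m2)) * (h1 - h2)
  rcases mul_eq_zero.mp h3 with h | h
  · linarith
  · -- a1 = a2 case
    have hK1 : ((2:ℝ) * ((l1+2*m1)*(l2+2*m2)))^2 * ((l1+2*m1)+(l2+2*m2)) ≠ 0 := by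
      positivity
    have hF1 : (l1*(l2+2*m2)+l2*(l1+2*m1))^2
        + 4*((l1+2*m1)+(l2+2*m2))*(m1*(l1+m1)*(l2+2*m2)+m2*(l2+m2)*(l1+2*m1))
        - 4*((l1+2*m1)*(l2+2*m2))^2 = 0 := by
      apply mul_left_cancel₀ hK1
      rw [mul_zero]
      linear_combination ((2:ℝ)*((l1+2*m1)*(l2+2*m2)))^2 * ((l1+2*m1)+(l2+2*m2)) * h1
    have hl : l1 = l2 + 2*m2 - 2*m1 := by linarith
    subst hl
    have hsq : 4*(l2+2*m2)^2*(m1-m2)^2 = 0 := by linear_combination -hF1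
    have h4 : (m1-m2)^2 = 0 := by
      rcases mul_eq_zero.mp hsq with h' | h'
      · exact absurd h' (by positivity)
      · exact h'
    have := pow_eq_zero_iff (n := 2) (by norm_num) |>.mp h4
    linarith

/-- For a PITL medium, if c1111 = c3333 and c1122 = c1133 then μ₁ = μ₂
and consequently c1212 = c2323; in other words, there is no Backus-average TI medium
with c1212 ≠ c2323, c1111 = c3333 and c1133 = c1111 − 2·c1212. -/
theorem stmt3 (l1 l2 m1 m2 : ℝ)
    (hm1 : 0 < m1) (hm2 : 0 < m2)
    (hs1 : 0 ≤ l1 + (2 / 3) * m1) (hs2 : 0 ≤ l2 + (2 / 3) * m2) :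
    (c1111 l1 l2 m1 m2 = c3333 l1 l2 m1 m2 →
      c1122 l1 l2 m1 m2 = c1133 l1 l2 m1 m2 →
      m1 = m2 ∧ c1212 l1 l2 m1 m2 = c2323 l1 l2 m1 m2) ∧
    ¬ (c1212 l1 l2 m1 m2 ≠ c2323 l1 l2 m1 m2 ∧
        c1111 l1 l2 m1 m2 = c3333 l1 l2 m1 m2 ∧
        c1133 l1 l2 m1 m2 = c1111 l1 l2 m1 m2 - 2 * c1212 l1 l2 m1 m2) := by
  have ha1 : 0 < l1 + 2*m1 := by linarith
  have ha2 : 0 < l2 + 2*m2 := by linarith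
  have ha1' : l1 + 2*m1 ≠ 0 := ne_of_gt ha1
  have ha2' : l2 + 2*m2 ≠ 0 := ne_of_gt ha2
  have hm1' : m1 ≠ 0 := ne_of_gt hm1
  have hm2' : m2 ≠ 0 := ne_of_gt hm2
  have key : c1111 l1 l2 m1 m2 = c3333 l1 l2 m1 m2 →
      c1122 l1 l2 m1 m2 = c1133 l1 l2 m1 m2 →
      m1 = m2 ∧ c1212 l1 l2 m1 m2 = c2323 l1 l2 m1 m2 := by
    intro h1 h2
    have hmm := mu_eq l1 l2 m1 m2 ha1 ha2 h1 h2
    refine ⟨hmm, ?_⟩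
    subst hmm
    simp only [c1212, c2323, avg2]
    field_simp
    norm_num
  have hdiff : c1111 l1 l2 m1 m2 - c1122 l1 l2 m1 m2 = 2 * c1212 l1 l2 m1 m2 := by
    simp only [c1111, c1122, c1212, avg2]
    field_simp
    ring
  refine ⟨key, ?_⟩
  rintro ⟨hne, h1, h3⟩
  exact hne (key h1 (by linarith)).2
end

section
/- There exist Lamé parameters λ₁, λ₂, μ₁, μ₂ satisfying the stability conditions (μᵢ > 0 and λᵢ + (2/3)μᵢ ≥ 0) such that the Backus-average coefficients of the corresponding periodic isotropic two-layered medium satisfy c1212 ≠ c2323, c1111 = c3333 and c1122 ≠ c1133; that is, a transversely isotropic equivalent medium with c1212 ≠ c2323, c1111 = c3333 and c1133 ≠ c1111 − 2·c1212 exists. -/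
open Filter Real

/-- There exist Lamé parameters satisfying the stability conditions
such that c1212 ≠ c2323, c1111 = c3333 and c1122 ≠ c1133 (equivalently,
c1133 ≠ c1111 − 2·c1212). -/
theorem stmt4 :
    ∃ l1 l2 m1 m2 : ℝ,
      0 < m1 ∧ 0 < m2 ∧ 0 ≤ l1 + (2 / 3) * m1 ∧ 0 ≤ l2 + (2 / 3) * m2 ∧
      c1212 l1 l2 m1 m2 ≠ c2323 l1 l2 m1 m2 ∧
      c1111 l1 l2 m1 m2 = c3333 l1 l2 m1 m2 ∧
      c1122 l1 l2 m1 m2 ≠ c1133 l1 l2 m1 m2 ∧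
      c1133 l1 l2 m1 m2 ≠ c1111 l1 l2 m1 m2 - 2 * c1212 l1 l2 m1 m2 := by
  refine ⟨1, 0, 1, 2, by norm_num, by norm_num, by norm_num, by norm_num, ?_, ?_, ?_, ?_⟩ <;>
    simp only [c1111, c1122, c1133, c3333, c2323, c1212, avg2] <;> norm_num
end

section
/- There exist Lamé parameters λ₁, λ₂, μ₁, μ₂ satisfying the stability conditions (μᵢ > 0 and λᵢ + (2/3)μᵢ ≥ 0) with λ₁ = λ₂, such that the Backus-average coefficients of the corresponding periodic isotropic two-layered medium satisfy c1212 ≠ c2323, c1111 ≠ c3333 and c1122 = c1133; that is, a transversely isotropic equivalent medium with c1212 ≠ c2323, c1111 ≠ c3333 and c1133 = c1111 − 2·c1212 exists. -/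
open Filter Real

/-- There exist Lamé parameters satisfying the stability conditions
with λ₁ = λ₂ such that c1212 ≠ c2323, c1111 ≠ c3333 and c1122 = c1133
(equivalently, c1133 = c1111 − 2·c1212). -/
theorem stmt5 :
    ∃ l1 l2 m1 m2 : ℝ,
      0 < m1 ∧ 0 < m2 ∧ 0 ≤ l1 + (2 / 3) * m1 ∧ 0 ≤ l2 + (2 / 3) * m2 ∧
      l1 = l2 ∧
      c1212 l1 l2 m1 m2 ≠ c2323 l1 l2 m1 m2 ∧
      c1111 l1 l2 m1 m2 ≠ c3333 l1 l2 m1 m2 ∧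
      c1122 l1 l2 m1 m2 = c1133 l1 l2 m1 m2 ∧
      c1133 l1 l2 m1 m2 = c1111 l1 l2 m1 m2 - 2 * c1212 l1 l2 m1 m2 := by
  refine ⟨0, 0, 1, 2, by norm_num, by norm_num, by norm_num, by norm_num, rfl, ?_, ?_, ?_, ?_⟩ <;>
    norm_num [c1111, c1122, c1133, c3333, c2323, c1212, avg2]
end

section
/- Let A, B, C, F, M be real numbers with A = B + 2M and C > 0. Then the pair of equations F² + 2MF − BC = 0 and 2M = C − F holds if and only if B = F and A = C. -/
/-- For reals A, B, C, F, M with A = B + 2M and C > 0, the equations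
F² + 2MF − BC = 0 and 2M = C − F hold iff B = F and A = C. -/
theorem stmt7 (A B C F M : ℝ) (hA : A = B + 2 * M) (hC : 0 < C) :
    (F ^ 2 + 2 * M * F - B * C = 0 ∧ 2 * M = C - F) ↔ (B = F ∧ A = C) := by
  constructor
  · rintro ⟨h1, h2⟩
    rw [h2] at h1
    have hCF : C * (F - B) = 0 := by ring_nf; nlinarith [h1]
    have : F - B = 0 := by
      rcases mul_eq_zero.mp hCF with h | h
      · exact absurd h (ne_of_gt hC)
      · exact h
    constructor
    · linarith
    · linarith [hA, h2]
  · rintro ⟨hBF, hAC⟩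
    have h2 : 2 * M = C - F := by linarith
    constructor
    · rw [h2, ← hBF]; ring
    · exact h2
end

section
/- For a periodic isotropic two-layered medium, if λ₁ = λ₂ or μ₁ = μ₂, then the anisotropy parameter φ equals 0. -/
open Filter Real

/-- For a PITL medium, if λ₁ = λ₂ or μ₁ = μ₂, then φ = 0. -/
theorem stmt12 (l1 l2 m1 m2 : ℝ)
    (hm1 : 0 < m1) (hm2 : 0 < m2)
    (hs1 : 0 ≤ l1 + (2 / 3) * m1) (hs2 : 0 ≤ l2 + (2 / 3) * m2)
    (hden : c1122 l1 l2 m1 m2 ≠ 0)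
    (h : l1 = l2 ∨ m1 = m2) :
    phi l1 l2 m1 m2 = 0 := by
  have hA1 : l1 + 2 * m1 > 0 := by nlinarith
  have hA2 : l2 + 2 * m2 > 0 := by nlinarith
  have hA1' : l1 + 2 * m1 ≠ 0 := ne_of_gt hA1
  have hA2' : l2 + 2 * m2 ≠ 0 := ne_of_gt hA2
  have hsum : l1 + 2 * m1 + (l2 + 2 * m2) ≠ 0 := by positivity
  have hkey : c1122 l1 l2 m1 m2 - c1133 l1 l2 m1 m2 = 0 := by
    rcases h with h | h <;> subst h <;>
      simp only [c1122, c1133, avg2] <;>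
      field_simp <;> ring
  unfold phi
  rw [hkey, zero_div]
end

section
/- There exist Lamé parameters λ₁, λ₂, μ₁, μ₂ satisfying the stability conditions (μᵢ > 0, λᵢ + (2/3)μᵢ ≥ 0) with λ₁ + 2μ₁ = λ₂ + 2μ₂ and φ > 0, and there also exist such parameters with λ₁ + 2μ₁ = λ₂ + 2μ₂ and φ < 0; hence for constant P-wave modulus the anisotropy parameter φ can take either sign. -/
open Filter Real

/-- For constant P-wave modulus λ₁ + 2μ₁ = λ₂ + 2μ₂, the
anisotropy parameter φ can take either sign. -/
theorem stmt18 :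
    (∃ l1 l2 m1 m2 : ℝ,
      0 < m1 ∧ 0 < m2 ∧ 0 ≤ l1 + (2 / 3) * m1 ∧ 0 ≤ l2 + (2 / 3) * m2 ∧
      l1 + 2 * m1 = l2 + 2 * m2 ∧ 0 < phi l1 l2 m1 m2) ∧
    (∃ l1 l2 m1 m2 : ℝ,
      0 < m1 ∧ 0 < m2 ∧ 0 ≤ l1 + (2 / 3) * m1 ∧ 0 ≤ l2 + (2 / 3) * m2 ∧
      l1 + 2 * m1 = l2 + 2 * m2 ∧ phi l1 l2 m1 m2 < 0) := by
  constructor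
  · exact ⟨-2, 2, 3, 1, by norm_num, by norm_num, by norm_num, by norm_num, by norm_num,
      by norm_num [phi, c1122, c1133, avg2]⟩
  · exact ⟨2, 0, 1, 2, by norm_num, by norm_num, by norm_num, by norm_num, by norm_num,
      by norm_num [phi, c1122, c1133, avg2]⟩
end
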